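/- Let π ∈ S_n be a permutation with pinnacle set S, |S| = p. There is a sequence R_1 of balanced reversals transforming π into a permutation whose pinnacles appear in increasing order from left to right, where R_1 consists of at most one reversal when p = 2, and of at most 2p − 4 reversals when p ≥ 3. -/

import Mathlib

/-- The block reversal: reverses the block of `π` between positions `a` and `b`. -/
def rev (π : ℕ → ℕ) (a b : ℕ) : ℕ → ℕ := fun i =>
  if a ≤ i ∧ i ≤ b then π (a + b - i) else π i

/-- Position `i` holds a pinnacle: `π (i-1) < π i > π (i+1)`. -/
def PinAt (π : ℕ → ℕ) (i : ℕ) : Prop := π (i - 1) < π i ∧ π (i + 1) < π i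

/-- Position `i` holds a dell: `π (i-1) > π i < π (i+1)`. -/
def DellAt (π : ℕ → ℕ) (i : ℕ) : Prop := π i < π (i - 1) ∧ π i < π (i + 1)

/-- Position `i` is ascending: its element belongs to an ascending set of `π`. -/
def AscAt (π : ℕ → ℕ) (i : ℕ) : Prop := π (i - 1) < π i ∧ π i < π (i + 1)

/-- Position `i` is descending: its element belongs to a descending set of `π`. -/
def DescAt (π : ℕ → ℕ) (i : ℕ) : Prop := π i < π (i - 1) ∧ π (i + 1) < π i

/-- The pinnacle set of `π ∈ S_n`, as a finset of values. -/
def pinFinset (n : ℕ) (π : ℕ → ℕ) : Finset ℕ :=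
  ((Finset.Icc 1 n).filter fun i => π (i - 1) < π i ∧ π (i + 1) < π i).image π

/-- The reversal with endpoints at positions `a ≤ b` is balanced for `π`:
it does not modify the pinnacle set. -/
def BalancedRev (n : ℕ) (π : ℕ → ℕ) (a b : ℕ) : Prop :=
  pinFinset n (rev π a b) = pinFinset n π

/-- Apply a sequence of reversals (each given by its pair of positions). -/
def applySeq (π : ℕ → ℕ) : List (ℕ × ℕ) → ℕ → ℕ
  | [] => π
  | ab :: L => applySeq (rev π ab.1 ab.2) L

/-- Every reversal of the sequence is balanced for the permutation to which
it is applied. -/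
def IsBalancedSeq (n : ℕ) (π : ℕ → ℕ) : List (ℕ × ℕ) → Prop
  | [] => True
  | ab :: L => 1 ≤ ab.1 ∧ ab.1 ≤ ab.2 ∧ ab.2 ≤ n ∧ BalancedRev n π ab.1 ab.2 ∧
      IsBalancedSeq n (rev π ab.1 ab.2) L

/-- `π` is the extension of a permutation of `{1,…,n}` by the boundary values
`π 0 = n+1` and `π (n+1) = n+2`. -/
def IsExtPerm (n : ℕ) (π : ℕ → ℕ) : Prop :=
  Set.BijOn π (Set.Icc 1 n) (Set.Icc 1 n) ∧ π 0 = n + 1 ∧ π (n + 1) = n + 2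

/-- The positions of the pinnacles of `π`, from left to right. -/
def pinPosList (n : ℕ) (π : ℕ → ℕ) : List ℕ :=
  ((Finset.Icc 1 n).filter fun i => π (i - 1) < π i ∧ π (i + 1) < π i).sort (· ≤ ·)

/-- The positions of the dells of `π`, from left to right. -/
def dellPosList (n : ℕ) (π : ℕ → ℕ) : List ℕ :=
  ((Finset.Icc 1 n).filter fun i => π i < π (i - 1) ∧ π i < π (i + 1)).sort (· ≤ ·)

/-- The pinnacles `y_1, …, y_p` of `π`, from left to right. -/
def pinList (n : ℕ) (π : ℕ → ℕ) : List ℕ := (pinPosList n π).map π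

/-- The dells `v_1, …, v_{p+1}` of `π`, from left to right. -/
def dellList (n : ℕ) (π : ℕ → ℕ) : List ℕ := (dellPosList n π).map π

/-- The position of the dell `v q` (dells are indexed from `1`). -/
def vPos (n : ℕ) (π : ℕ → ℕ) (q : ℕ) : ℕ := (dellPosList n π).getD (q - 1) 0

/-- The dell `v q`. -/
def vVal (n : ℕ) (π : ℕ → ℕ) (q : ℕ) : ℕ := π (vPos n π q)

/-- The position of the pinnacle `y q`, where `y 0` is at position `0` and
`y (p+1)` is at position `n+1`. -/
def yPos (n : ℕ) (π : ℕ → ℕ) (q : ℕ) : ℕ :=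
  if q = 0 then 0 else (pinPosList n π).getD (q - 1) (n + 1)

/-- The pinnacle `y q`, where `y 0 = π 0 = n+1` and `y (p+1) = π (n+1) = n+2`. -/
def yVal (n : ℕ) (π : ℕ → ℕ) (q : ℕ) : ℕ := π (yPos n π q)

/-- The elements of `π` at positions `1, …, n`, read from left to right. -/
def toList (n : ℕ) (π : ℕ → ℕ) : List ℕ := (List.range n).map fun i => π (i + 1)

/-- The cutpoint `cutA_π(z, v_q, y_q)`: the largest element `e` of
`A_π(v_q, y_q) ∪ {v_q}` such that `e < z`. -/
noncomputable def cutA (n : ℕ) (π : ℕ → ℕ) (q z : ℕ) : ℕ :=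
  sSup ((insert (vVal n π q) (π '' Set.Ioo (vPos n π q) (yPos n π q))) ∩ Set.Iio z)

/-- The cutpoint `cutD_π(z, y_{q-1}, v_q)`: the largest element `e` of
`D_π(y_{q-1}, v_q) ∪ {v_q}` such that `e < z`. -/
noncomputable def cutD (n : ℕ) (π : ℕ → ℕ) (q z : ℕ) : ℕ :=
  sSup ((insert (vVal n π q) (π '' Set.Ioo (yPos n π (q - 1)) (vPos n π q))) ∩ Set.Iio z)

/-- The canonical permutation `Id_S ∈ S_n` (extended by its boundary values):
the elements of `S` in increasing order at positions `2, 4, …, 2|S|`, and the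
elements of `{1,…,n} \ S` in increasing order at the remaining positions. -/
def canon (n : ℕ) (S : Finset ℕ) : ℕ → ℕ := fun i =>
  if i = 0 then n + 1
  else if i = n + 1 then n + 2
  else if i ≤ 2 * S.card ∧ i % 2 = 0 then (S.sort (· ≤ ·)).getD (i / 2 - 1) 0
  else if i ≤ 2 * S.card then (((Finset.Icc 1 n) \ S).sort (· ≤ ·)).getD ((i - 1) / 2) 0
  else (((Finset.Icc 1 n) \ S).sort (· ≤ ·)).getD (i - S.card - 1) 0

open List

/-- Boolean pinnacle predicate. -/
def pb (π : ℕ → ℕ) : ℕ → Bool := fun i => decide (π (i - 1) < π i ∧ π (i + 1) < π i)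

lemma pb_iff {π : ℕ → ℕ} {i : ℕ} : pb π i = true ↔ PinAt π i := by
  simp [pb, PinAt]

lemma pinPosList_eq (n : ℕ) (π : ℕ → ℕ) :
    pinPosList n π = (List.range' 1 n).filter (pb π) := by
  refine (fun hp h1 h2 => List.Perm.eq_of_pairwise' (r := (· ≤ ·)) h1 h2 hp) ?_ ?_ ?_
  · apply List.perm_of_nodup_nodup_toFinset_eq (Finset.sort_nodup _ _)
      ((List.nodup_range' (s := 1) (n := n) 1).filter _)
    ext x
    simp only [List.mem_toFinset, Finset.mem_sort, Finset.mem_filter, Finset.mem_Icc,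
      List.mem_filter, List.mem_range'_1, pb_iff, PinAt, pinPosList]
    constructor
    · rintro ⟨h1, h2⟩; exact ⟨⟨h1.1, by omega⟩, h2⟩
    · rintro ⟨h1, h2⟩; exact ⟨⟨h1.1, by omega⟩, h2⟩
  · exact Finset.pairwise_sort _ _
  · exact ((List.pairwise_lt_range' 1).sublist List.filter_sublist).imp le_of_lt

lemma pinPosList_sorted (n : ℕ) (π : ℕ → ℕ) : (pinPosList n π).Pairwise (· < ·) := by
  rw [pinPosList_eq]
  exact (List.pairwise_lt_range' 1).sublist List.filter_sublist

lemma mem_pinPosList {n : ℕ} {π : ℕ → ℕ} {x : ℕ} :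
    x ∈ pinPosList n π ↔ (1 ≤ x ∧ x ≤ n) ∧ PinAt π x := by
  rw [pinPosList_eq]
  simp only [List.mem_filter, List.mem_range'_1, pb_iff]
  constructor
  · rintro ⟨h1, h2⟩; exact ⟨⟨h1.1, by omega⟩, h2⟩
  · rintro ⟨h1, h2⟩; exact ⟨⟨h1.1, by omega⟩, h2⟩

lemma pinFinset_eq (n : ℕ) (π : ℕ → ℕ) : pinFinset n π = (pinList n π).toFinset := by
  ext y
  simp only [pinFinset, Finset.mem_image, Finset.mem_filter, Finset.mem_Icc, pinList,
    List.mem_toFinset, List.mem_map, mem_pinPosList, PinAt]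

section ExtPerm
variable {n : ℕ} {π : ℕ → ℕ}

lemma ep_val (hπ : IsExtPerm n π) {i : ℕ} (h1 : 1 ≤ i) (h2 : i ≤ n) :
    1 ≤ π i ∧ π i ≤ n := by
  have := hπ.1.mapsTo (show i ∈ Set.Icc 1 n from ⟨h1, h2⟩)
  exact this

lemma ep_inj (hπ : IsExtPerm n π) {i j : ℕ} (h1 : i ≤ n + 1) (h2 : j ≤ n + 1)
    (h : π i = π j) : i = j := by
  rcases hπ with ⟨hb, h0, hn1⟩
  by_cases hi0 : i = 0
  · subst hi0
    by_cases hj0 : j = 0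
    · omega
    · by_cases hjn : j = n + 1
      · subst hjn; omega
      · have := hb.mapsTo (show j ∈ Set.Icc 1 n from ⟨by omega, by omega⟩)
        rw [h0] at h; simp [Set.mem_Icc] at this; omega
  · by_cases hin : i = n + 1
    · subst hin
      by_cases hj0 : j = 0
      · subst hj0; omega
      · by_cases hjn : j = n + 1
        · omega
        · have := hb.mapsTo (show j ∈ Set.Icc 1 n from ⟨by omega, by omega⟩)
          rw [hn1] at h; simp [Set.mem_Icc] at this; omega
    · have hiV := hb.mapsTo (show i ∈ Set.Icc 1 n from ⟨by omega, by omega⟩)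
      simp [Set.mem_Icc] at hiV
      by_cases hj0 : j = 0
      · subst hj0; rw [h0] at h; omega
      · by_cases hjn : j = n + 1
        · subst hjn; rw [hn1] at h; omega
        · exact hb.injOn ⟨by omega, by omega⟩ ⟨by omega, by omega⟩ h

lemma rev_out {a b i : ℕ} (h : i < a ∨ b < i) : rev π a b i = π i := by
  unfold rev
  rw [if_neg]; omega

lemma rev_in {a b i : ℕ} (h1 : a ≤ i) (h2 : i ≤ b) : rev π a b i = π (a + b - i) := by
  unfold rev
  rw [if_pos ⟨h1, h2⟩]

lemma rev_extPerm (hπ : IsExtPerm n π) {a b : ℕ} (h1 : 1 ≤ a) (hab : a ≤ b) (hbn : b ≤ n) :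
    IsExtPerm n (rev π a b) := by
  obtain ⟨hb, h0, hn1⟩ := hπ
  refine ⟨⟨?_, ?_, ?_⟩, by rw [rev_out (by omega)]; exact h0,
    by rw [rev_out (by omega)]; exact hn1⟩
  · intro x hx
    by_cases hm : a ≤ x ∧ x ≤ b
    · rw [rev_in hm.1 hm.2]
      exact hb.mapsTo ⟨by omega, by omega⟩
    · rw [rev_out (by omega)]; exact hb.mapsTo hx
  · intro x hx y hy hxy
    simp only [Set.mem_Icc] at hx hy
    by_cases hmx : a ≤ x ∧ x ≤ b <;> by_cases hmy : a ≤ y ∧ y ≤ b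
    · rw [rev_in hmx.1 hmx.2, rev_in hmy.1 hmy.2] at hxy
      have := ep_inj ⟨hb, h0, hn1⟩ (i := a + b - x) (j := a + b - y) (by omega) (by omega) hxy
      omega
    · rw [rev_in hmx.1 hmx.2, rev_out (by omega)] at hxy
      have := ep_inj ⟨hb, h0, hn1⟩ (i := a + b - x) (j := y) (by omega) (by omega) hxy
      omega
    · rw [rev_out (by omega), rev_in hmy.1 hmy.2] at hxy
      have := ep_inj ⟨hb, h0, hn1⟩ (i := x) (j := a + b - y) (by omega) (by omega) hxy
      omega
    · rw [rev_out (by omega), rev_out (by omega)] at hxy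
      exact ep_inj ⟨hb, h0, hn1⟩ (by omega) (by omega) hxy
  · intro y hy
    obtain ⟨x, hx, hxy⟩ := hb.surjOn hy
    simp only [Set.mem_Icc] at hx
    by_cases hm : a ≤ x ∧ x ≤ b
    · refine ⟨a + b - x, ⟨by omega, by omega⟩, ?_⟩
      rw [rev_in (by omega) (by omega)]
      have : a + b - (a + b - x) = x := by omega
      rw [this]; exact hxy
    · exact ⟨x, ⟨by omega, by omega⟩, by rw [rev_out (by omega)]; exact hxy⟩

/-- The unified "good cut" condition for a balanced reversal. -/
def Good (π : ℕ → ℕ) (a b : ℕ) : Prop :=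
  (π a < π (a-1) ∧ π b < π (b+1) ∧ π b < π (a-1) ∧ π a < π (b+1)) ∨
  (π (a-1) < π a ∧ π (b+1) < π b ∧ π (a-1) < π b ∧ π (b+1) < π a)

lemma pinAt_rev {a b : ℕ} (h1 : 1 ≤ a) (hab : a ≤ b) (hG : Good π a b)
    {i : ℕ} (hi1 : 1 ≤ i) :
    PinAt (rev π a b) i ↔ (if a ≤ i ∧ i ≤ b then PinAt π (a + b - i) else PinAt π i) := by
  have ro : ∀ j, (j < a ∨ b < j) → rev π a b j = π j := fun j h => rev_out h
  have ri : ∀ j, a ≤ j → j ≤ b → rev π a b j = π (a + b - j) := fun j u v => rev_in u v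
  unfold PinAt
  rcases Nat.lt_or_ge i a with hia | hia
  · -- i < a
    rw [if_neg (by omega), ro (i-1) (by omega), ro i (by omega)]
    rcases Nat.lt_or_ge (i+1) a with hi1a | hi1a
    · rw [ro (i+1) (by omega)]
    · -- i + 1 = a
      rw [ri (i+1) (by omega) (by omega), show a + b - (i+1) = b by omega,
        show π i = π (a-1) by rw [show i = a - 1 by omega],
        show π (i+1) = π a by rw [show i + 1 = a by omega]]
      rcases hG with ⟨g1, g2, g3, g4⟩ | ⟨g1, g2, g3, g4⟩ <;> constructor <;>
        rintro ⟨u, v⟩ <;> exact ⟨u, by omega⟩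
  · rcases Nat.lt_or_ge b i with hbi | hbi
    · -- i > b
      rw [if_neg (by omega), ro i (by omega), ro (i+1) (by omega)]
      rcases Nat.lt_or_ge (b+1) i with hb1i | hb1i
      · rw [ro (i-1) (by omega)]
      · -- i = b + 1
        rw [show i - 1 = b by omega, ri b (by omega) (by omega),
          show a + b - b = a by omega, show π i = π (b+1) by rw [show i = b + 1 by omega]]
        rcases hG with ⟨g1, g2, g3, g4⟩ | ⟨g1, g2, g3, g4⟩ <;> constructor <;>
          rintro ⟨u, v⟩ <;> exact ⟨by omega, v⟩
    · -- a ≤ i ≤ b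
      rw [if_pos ⟨hia, hbi⟩, ri i (by omega) (by omega)]
      rcases Nat.eq_or_lt_of_le hab with heq | hlt
      · -- a = b, so i = a = b
        rw [show a + b - i = i by omega, ro (i-1) (by omega), ro (i+1) (by omega)]
      · rcases Nat.lt_or_ge a i with hai | hai
        · rcases Nat.lt_or_ge i b with hib | hib
          · -- a < i < b : interior
            rw [ri (i-1) (by omega) (by omega), ri (i+1) (by omega) (by omega),
              show a + b - (i - 1) = (a + b - i) + 1 by omega,
              show a + b - (i + 1) = (a + b - i) - 1 by omega]
            exact ⟨fun ⟨u, v⟩ => ⟨v, u⟩, fun ⟨u, v⟩ => ⟨v, u⟩⟩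
          · -- i = b > a
            rw [ri (i-1) (by omega) (by omega), ro (i+1) (by omega),
              show a + b - (i - 1) = (a + b - i) + 1 by omega,
              show a + b - i = a by omega,
              show π (i+1) = π (b+1) by rw [show i + 1 = b + 1 by omega]]
            rcases hG with ⟨g1, g2, g3, g4⟩ | ⟨g1, g2, g3, g4⟩ <;> constructor <;>
              rintro ⟨u, v⟩ <;> exact ⟨by omega, by omega⟩
        · -- i = a < b
          rw [ro (i-1) (by omega), ri (i+1) (by omega) (by omega),
            show a + b - i = b by omega, show a + b - (i+1) = b - 1 by omega,
            show π (i-1) = π (a-1) by rw [show i - 1 = a - 1 by omega]]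
          rcases hG with ⟨g1, g2, g3, g4⟩ | ⟨g1, g2, g3, g4⟩ <;> constructor <;>
            rintro ⟨u, v⟩ <;> exact ⟨by omega, by omega⟩
end ExtPerm

section Decomp
variable {n : ℕ} {π : ℕ → ℕ}

lemma mapSubRange' : ∀ (k s c : ℕ), s + k ≤ c + 1 →
    (List.range' s k).map (fun i => c - i) = (List.range' (c + 1 - (s + k)) k).reverse := by
  intro k
  induction k with
  | zero => intro s c _; simp
  | succ k ih =>
    intro s c h
    rw [List.range'_succ, List.map_cons, ih (s+1) c (by omega),
      show List.range' (c + 1 - (s + (k+1))) (k+1) =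
        List.range' (c + 1 - (s + (k+1))) k ++ [c + 1 - (s + (k+1)) + 1 * k] from
          List.range'_concat,
      List.reverse_append]
    simp only [List.reverse_cons, List.reverse_nil, List.nil_append, List.cons_append,
      List.nil_append]
    have e1 : c - s = c + 1 - (s + (k+1)) + 1 * k := by omega
    have e2 : c + 1 - (s + 1 + k) = c + 1 - (s + (k+1)) := by omega
    rw [e1, e2]

lemma range'_split {a b : ℕ} (h1 : 1 ≤ a) (hab : a ≤ b) (hbn : b ≤ n) :
    List.range' 1 n = List.range' 1 (a-1) ++ List.range' a (b+1-a) ++ List.range' (b+1) (n-b) := by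
  have h1' := List.range'_append (s := 1) (m := a-1) (n := b+1-a) (step := 1)
  rw [show 1 + 1*(a-1) = a by omega, show (a-1) + (b+1-a) = b by omega] at h1'
  have h2' := List.range'_append (s := 1) (m := b) (n := n-b) (step := 1)
  rw [show 1 + 1*b = b+1 by omega, show b + (n-b) = n by omega] at h2'
  rw [← h2', ← h1', List.append_assoc]

lemma pinList_decomp {a b : ℕ} (h1 : 1 ≤ a) (hab : a ≤ b) (hbn : b ≤ n) :
    pinPosList n π = (List.range' 1 (a-1)).filter (pb π) ++ (List.range' a (b+1-a)).filter (pb π)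
      ++ (List.range' (b+1) (n-b)).filter (pb π) := by
  rw [pinPosList_eq, range'_split h1 hab hbn, List.filter_append, List.filter_append]

lemma filter_mid_rev {a b : ℕ} (h1 : 1 ≤ a) (hab : a ≤ b) (hG : Good π a b) :
    (List.range' a (b+1-a)).filter (pb (rev π a b)) =
      (((List.range' a (b+1-a)).filter (pb π)).map (fun i => a + b - i)).reverse := by
  have hrange : (List.range' a (b+1-a)).map (fun i => a + b - i) =
      (List.range' a (b+1-a)).reverse := by
    rw [mapSubRange' _ _ _ (by omega)]
    congr 2
    omega
  conv_lhs => rw [show List.range' a (b+1-a) = ((List.range' a (b+1-a)).map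
    (fun i => a + b - i)).reverse by rw [hrange, List.reverse_reverse]]
  rw [List.filter_reverse, List.filter_map]
  congr 2
  apply List.filter_congr
  intro i hi
  simp only [List.mem_range'_1] at hi
  have hia : a ≤ i ∧ i ≤ b := by omega
  have hmem : a ≤ a + b - i ∧ a + b - i ≤ b := by omega
  simp only [Function.comp]
  have := pinAt_rev (π := π) h1 hab hG (i := a + b - i) (by omega)
  rw [if_pos hmem, show a + b - (a + b - i) = i by omega] at this
  simp only [pb, decide_eq_decide]
  exact this

lemma pinList_rev_eq {a b : ℕ} (h1 : 1 ≤ a) (hab : a ≤ b) (hbn : b ≤ n) (hG : Good π a b) :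
    pinList n (rev π a b) =
      ((List.range' 1 (a-1)).filter (pb π)).map π
      ++ (((List.range' a (b+1-a)).filter (pb π)).map π).reverse
      ++ ((List.range' (b+1) (n-b)).filter (pb π)).map π := by
  have hL : pinPosList n (rev π a b) =
      (List.range' 1 (a-1)).filter (pb π)
      ++ (((List.range' a (b+1-a)).filter (pb π)).map (fun i => a + b - i)).reverse
      ++ (List.range' (b+1) (n-b)).filter (pb π) := by
    rw [pinPosList_eq, range'_split h1 hab hbn, List.filter_append, List.filter_append,
      filter_mid_rev h1 hab hG]
    congr 1
    · congr 1
      apply List.filter_congr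
      intro i hi
      simp only [List.mem_range'_1] at hi
      have := pinAt_rev (π := π) h1 hab hG (i := i) (by omega)
      rw [if_neg (by omega)] at this
      simp only [pb, decide_eq_decide]
      exact this
    · apply List.filter_congr
      intro i hi
      simp only [List.mem_range'_1] at hi
      have := pinAt_rev (π := π) h1 hab hG (i := i) (by omega)
      rw [if_neg (by omega)] at this
      simp only [pb, decide_eq_decide]
      exact this
  rw [pinList, hL]
  simp only [List.map_append, List.map_reverse, List.map_map]
  congr 1
  · congr 1
    · apply List.map_congr_left
      intro i hi
      simp only [List.mem_filter, List.mem_range'_1] at hi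
      exact rev_out (by omega)
    · congr 1
      apply List.map_congr_left
      intro i hi
      simp only [List.mem_filter, List.mem_range'_1, Function.comp] at hi ⊢
      rw [rev_in (by omega) (by omega), show a + b - (a + b - i) = i by omega]
  · apply List.map_congr_left
    intro i hi
    simp only [List.mem_filter, List.mem_range'_1] at hi
    exact rev_out (by omega)

end Decomp

section Valley
variable {n : ℕ} {π : ℕ → ℕ}

lemma chain_dec {f : ℕ → ℕ} {i m : ℕ} (h : ∀ k, i ≤ k → k < m → f (k+1) < f k) :
    ∀ {l}, i < l → l ≤ m → f l < f i := by
  intro l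
  induction l with
  | zero => omega
  | succ l ih =>
    intro h1 h2
    rcases Nat.lt_or_ge i l with h' | h'
    · exact lt_trans (h l (by omega) (by omega)) (ih h' (by omega))
    · have : i = l := by omega
      subst this
      exact h i le_rfl (by omega)

lemma chain_inc {f : ℕ → ℕ} {m j : ℕ} (h : ∀ k, m ≤ k → k < j → f k < f (k+1)) :
    ∀ {l}, m ≤ l → l < j → f l < f j := by
  have h' : ∀ k, m ≤ k → k < j → f (k+1) > f k := h
  intro l h1 h2
  -- prove f l < f j by downward: induction on j - l
  have : ∀ d l, m ≤ l → l < j → j - l = d → f l < f j := by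
    intro d
    induction d with
    | zero => omega
    | succ d ih =>
      intro l h1 h2 h3
      rcases Nat.lt_or_ge (l+1) j with h4 | h4
      · exact lt_trans (h l h1 h2) (ih (l+1) (by omega) h4 (by omega))
      · have : l + 1 = j := by omega
        rw [← this]
        exact h l h1 h2
  exact this (j - l) l h1 h2 rfl

lemma valley (hπ : IsExtPerm n π) {i j : ℕ} (hij : i < j) (hjn : j ≤ n + 1)
    (hi : i = 0 ∨ PinAt π i) (hj : j = n + 1 ∨ PinAt π j)
    (hno : ∀ k, i < k → k < j → ¬ PinAt π k)
    (hne : 1 ≤ i ∨ j ≤ n) :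
    ∃ m, i < m ∧ m < j ∧ (∀ k, i ≤ k → k < m → π (k+1) < π k) ∧
      (∀ k, m ≤ k → k < j → π k < π (k+1)) := by
  obtain ⟨hb, h0, hn1⟩ := hπ
  have hval : ∀ k, 1 ≤ k → k ≤ n → 1 ≤ π k ∧ π k ≤ n := fun k u v => ep_val ⟨hb, h0, hn1⟩ u v
  have hinj : ∀ x y, x ≤ n + 1 → y ≤ n + 1 → π x = π y → x = y :=
    fun x y u v w => ep_inj ⟨hb, h0, hn1⟩ u v w
  -- an ascent exists at j - 1
  have hasc : i ≤ j - 1 ∧ π (j-1) < π j := by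
    rcases hj with rfl | hpj
    · constructor
      · omega
      · have hn : 1 ≤ n := by
          rcases hne with h' | h' <;> omega
        rw [show n + 1 - 1 = n by omega, hn1]
        have := hval n (by omega) le_rfl
        omega
    · exact ⟨by omega, hpj.1⟩
  classical
  let P : ℕ → Prop := fun k => i ≤ k ∧ π k < π (k+1)
  have hex : ∃ k, P k := ⟨j - 1, hasc.1, by rw [show j - 1 + 1 = j by omega]; exact hasc.2⟩
  let m := Nat.find hex
  have hPm : P m := Nat.find_spec hex
  have hmle : m ≤ j - 1 := Nat.find_le ⟨hasc.1, by rw [show j - 1 + 1 = j by omega]; exact hasc.2⟩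
  have hmin : ∀ k, k < m → ¬ P k := fun k hk => Nat.find_min hex hk
  -- m > i
  have hmi : i < m := by
    rcases Nat.eq_or_lt_of_le hPm.1 with heq | h'
    · exfalso
      rcases hi with rfl | hpi
      · -- i = 0 : π 0 > π 1
        have : π 1 ≤ n := by
          have : 1 ≤ n := by omega
          exact (hval 1 (by omega) this).2
        rw [← heq] at hPm
        have h2 := hPm.2
        rw [h0] at h2
        have h3 : π (0 + 1) = π 1 := rfl
        omega
      · rw [← heq] at hPm
        have := hPm.2
        have := hpi.2
        omega
    · exact h'
  refine ⟨m, hmi, by omega, ?_, ?_⟩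
  · -- descending on [i, m)
    intro k hk1 hk2
    have hnP : ¬ P k := hmin k hk2
    have hne' : π k ≠ π (k+1) := by
      intro he
      have : k = k + 1 := hinj k (k+1) (by omega) (by omega) he
      omega
    have : ¬ (π k < π (k+1)) := fun hc => hnP ⟨hk1, hc⟩
    omega
  · -- ascending on [m, j)
    intro k hk1 hk2
    -- strong: prove by induction from m
    induction k with
    | zero =>
      have : m = 0 := by omega
      rw [this] at hPm
      exact hPm.2
    | succ k ih =>
      rcases Nat.eq_or_lt_of_le hk1 with heq | h'
      · rw [← heq]; exact hPm.2
      · have hk : m ≤ k := by omega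
        have hprev : π k < π (k+1) := ih hk (by omega)
        by_contra hc
        have hne' : π (k+1) ≠ π (k+1+1) := by
          intro he
          have : k + 1 = k + 1 + 1 := hinj _ _ (by omega) (by omega) he
          omega
        have hdesc : π (k+1+1) < π (k+1) := by omega
        have : PinAt π (k+1) := ⟨by simpa using hprev, hdesc⟩
        exact hno (k+1) (by omega) (by omega) this
end Valley

section Cuts
variable {n : ℕ} {π : ℕ → ℕ}

/-- Cut existence, type 1 (cuts in a descending and a later ascending run). -/
lemma cutT1 (hπ : IsExtPerm n π) {i₁ m₁ m₂ j₂ : ℕ}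
    (h1 : i₁ < m₁) (h2 : m₂ < j₂) (h3 : m₁ < m₂) (h4 : j₂ ≤ n + 1)
    (hdec : ∀ k, i₁ ≤ k → k < m₁ → π (k+1) < π k)
    (hinc : ∀ k, m₂ ≤ k → k < j₂ → π k < π (k+1))
    (hA : π m₂ < π i₁) (hB : π m₁ < π j₂) :
    ∃ a b, i₁ < a ∧ a ≤ m₁ ∧ m₂ ≤ b ∧ b < j₂ ∧
      (π a < π (a-1) ∧ π b < π (b+1) ∧ π b < π (a-1) ∧ π a < π (b+1)) := by
  have hinj : ∀ x y, x ≤ n + 1 → y ≤ n + 1 → π x = π y → x = y :=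
    fun x y u v w => ep_inj hπ u v w
  classical
  rcases Nat.lt_or_ge (π i₁) (π j₂) with hc | hc
  · -- choose b maximal in [m₂, j₂) with π b < π i₁, a := i₁ + 1
    set Q : ℕ → Prop := fun b => m₂ ≤ b ∧ π b < π i₁ with hQ
    have hQm : Q m₂ := ⟨le_rfl, hA⟩
    set b := Nat.findGreatest Q (j₂ - 1) with hbdef
    have hb1 : Q b := Nat.findGreatest_spec (m := m₂) (by omega) hQm
    have hble : b ≤ j₂ - 1 := Nat.findGreatest_le _
    have hbnext : π i₁ < π (b+1) := by
      rcases Nat.lt_or_ge (b+1) j₂ with h' | h'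
      · have hng : ¬ Q (b+1) := Nat.findGreatest_is_greatest (n := j₂ - 1) (by omega) (by omega)
        have : ¬ (π (b+1) < π i₁) := fun hcon => hng ⟨by omega, hcon⟩
        have hne : π (b+1) ≠ π i₁ := by
          intro he
          have := hinj (b+1) i₁ (by omega) (by omega) he
          omega
        omega
      · have : b + 1 = j₂ := by omega
        rw [this]; exact hc
    refine ⟨i₁ + 1, b, by omega, by omega, hb1.1, by omega, ?_, ?_, ?_, ?_⟩
    · rw [show i₁ + 1 - 1 = i₁ by omega]
      exact hdec i₁ le_rfl (by omega)
    · exact hinc b hb1.1 (by omega)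
    · rw [show i₁ + 1 - 1 = i₁ by omega]
      exact hb1.2
    · have : π (i₁ + 1) < π i₁ := hdec i₁ le_rfl (by omega)
      omega
  · -- π j₂ < π i₁ (they are distinct)
    have hc' : π j₂ < π i₁ := by
      have hne : π i₁ ≠ π j₂ := by
        intro he
        have := hinj i₁ j₂ (by omega) (by omega) he
        omega
      omega
    set Q : ℕ → Prop := fun a => i₁ < a ∧ π a < π j₂ with hQ
    have hex : ∃ a, Q a := ⟨m₁, h1, hB⟩
    set a := Nat.find hex with hadef
    have ha1 : Q a := Nat.find_spec hex
    have hale : a ≤ m₁ := Nat.find_le ⟨h1, hB⟩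
    have haprev : π j₂ < π (a-1) := by
      rcases Nat.eq_or_lt_of_le ha1.1 with h' | h'
      · rw [show a - 1 = i₁ by omega]; exact hc'
      · have hng : ¬ Q (a-1) := Nat.find_min hex (by omega)
        have : ¬ (π (a-1) < π j₂) := fun hcon => hng ⟨by omega, hcon⟩
        have hne : π (a-1) ≠ π j₂ := by
          intro he
          have := hinj (a-1) j₂ (by omega) (by omega) he
          omega
        omega
    refine ⟨a, j₂ - 1, ha1.1, hale, by omega, by omega, ?_, ?_, ?_, ?_⟩
    · have h := hdec (a-1) (by omega) (by omega)
      rwa [show a - 1 + 1 = a by omega] at h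
    · exact hinc (j₂ - 1) (by omega) (by omega)
    · have hb2 : π (j₂ - 1) < π j₂ := by
        have := hinc (j₂ - 1) (by omega) (by omega)
        rwa [show j₂ - 1 + 1 = j₂ by omega] at this
      omega
    · rw [show j₂ - 1 + 1 = j₂ by omega]
      exact ha1.2

/-- Cut existence, type 2 (cuts in an ascending and a later descending run). -/
lemma cutT2 (hπ : IsExtPerm n π) {m₁ P1 P2 m₂ : ℕ}
    (h1 : m₁ < P1) (h2 : P2 < m₂) (h3 : P1 < P2) (h4 : m₂ ≤ n + 1)
    (hinc : ∀ k, m₁ ≤ k → k < P1 → π k < π (k+1))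
    (hdec : ∀ k, P2 ≤ k → k < m₂ → π (k+1) < π k)
    (hA : π m₁ < π P2) (hB : π m₂ < π P1) :
    ∃ a b, m₁ < a ∧ a ≤ P1 ∧ P2 ≤ b ∧ b < m₂ ∧
      (π (a-1) < π a ∧ π (b+1) < π b ∧ π (a-1) < π b ∧ π (b+1) < π a) := by
  have hinj : ∀ x y, x ≤ n + 1 → y ≤ n + 1 → π x = π y → x = y :=
    fun x y u v w => ep_inj hπ u v w
  classical
  rcases Nat.lt_or_ge (π P2) (π P1) with hc | hc
  · -- a minimal in (m₁, P1] with π P2 < π a ; b := P2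
    set Q : ℕ → Prop := fun a => m₁ < a ∧ π P2 < π a with hQ
    have hex : ∃ a, Q a := ⟨P1, h1, hc⟩
    set a := Nat.find hex with hadef
    have ha1 : Q a := Nat.find_spec hex
    have hale : a ≤ P1 := Nat.find_le ⟨h1, hc⟩
    have haprev : π (a-1) < π P2 := by
      rcases Nat.eq_or_lt_of_le ha1.1 with h' | h'
      · rw [show a - 1 = m₁ by omega]; exact hA
      · have hng : ¬ Q (a-1) := Nat.find_min hex (by omega)
        have : ¬ (π P2 < π (a-1)) := fun hcon => hng ⟨by omega, hcon⟩
        have hne : π (a-1) ≠ π P2 := by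
          intro he
          have := hinj (a-1) P2 (by omega) (by omega) he
          omega
        omega
    have hstep : π (a-1) < π a := by
      have := hinc (a-1) (by omega) (by omega)
      rwa [show a - 1 + 1 = a by omega] at this
    refine ⟨a, P2, ha1.1, hale, le_rfl, by omega, hstep, ?_, ?_, ?_⟩
    · exact hdec P2 le_rfl (by omega)
    · omega
    · have := hdec P2 le_rfl (by omega)
      have := ha1.2
      omega
  · -- π P1 < π P2 : b maximal in [P2, m₂) with π P1 < π b ; a := P1
    have hc' : π P1 < π P2 := by
      have hne : π P1 ≠ π P2 := by
        intro he
        have := hinj P1 P2 (by omega) (by omega) he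
        omega
      omega
    set Q : ℕ → Prop := fun b => P2 ≤ b ∧ π P1 < π b with hQ
    have hQm : Q P2 := ⟨le_rfl, hc'⟩
    set b := Nat.findGreatest Q (m₂ - 1) with hbdef
    have hb1 : Q b := Nat.findGreatest_spec (m := P2) (by omega) hQm
    have hble : b ≤ m₂ - 1 := Nat.findGreatest_le _
    have hbnext : π (b+1) < π P1 := by
      rcases Nat.lt_or_ge (b+1) m₂ with h' | h'
      · have hng : ¬ Q (b+1) := Nat.findGreatest_is_greatest (n := m₂ - 1) (by omega) (by omega)
        have : ¬ (π P1 < π (b+1)) := fun hcon => hng ⟨by omega, hcon⟩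
        have hne : π (b+1) ≠ π P1 := by
          intro he
          have := hinj (b+1) P1 (by omega) (by omega) he
          omega
        omega
      · have : b + 1 = m₂ := by omega
        rw [this]; exact hB
    have hstep : π (P1 - 1) < π P1 := by
      have := hinc (P1-1) (by omega) (by omega)
      rwa [show P1 - 1 + 1 = P1 by omega] at this
    refine ⟨P1, b, h1, le_rfl, hb1.1, by omega, hstep, ?_, ?_, hbnext⟩
    · exact hdec b hb1.1 (by omega)
    · have := hb1.2
      omega
end Cuts

section Utils

lemma eq_filter_left {p : ℕ → Bool} {l x y : List ℕ} (h : l = x ++ y)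
    (hx : ∀ e ∈ x, p e = true) (hy : ∀ e ∈ y, p e = false) : x = l.filter p := by
  subst h
  rw [List.filter_append, List.filter_eq_self.2 hx,
    List.filter_eq_nil_iff.2 (fun a ha => by rw [hy a ha]; simp), List.append_nil]

lemma exists_argmax : ∀ (l : List ℕ), l ≠ [] →
    ∃ q, ∃ hq : q < l.length, ∀ j (hj : j < l.length), l[j] ≤ l[q] := by
  intro l
  induction l with
  | nil => intro h; exact absurd rfl h
  | cons x xs ih =>
    intro _
    rcases eq_or_ne xs [] with rfl | hne
    · exact ⟨0, by simp, by intro j hj; simp at hj; subst hj; simp⟩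
    · obtain ⟨q, hq, hmax⟩ := ih hne
      rcases Nat.lt_or_ge xs[q] x with hlt | hle
      case inr =>
        refine ⟨q + 1, by simpa using Nat.succ_lt_succ hq, ?_⟩
        intro j hj
        match j with
        | 0 => simpa using hle
        | j + 1 =>
          have hj' : j < xs.length := by simpa using hj
          have : xs[j] ≤ xs[q] := hmax j hj'
          simpa using this
      · refine ⟨0, by simp, ?_⟩
        intro j hj
        match j with
        | 0 => simp
        | j + 1 =>
          have hj' : j < xs.length := by simpa using hj
          have : xs[j] ≤ xs[q] := hmax j hj'
          simp only [List.getElem_cons_succ, List.getElem_cons_zero]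
          omega

lemma pinList_nodup {n : ℕ} {π : ℕ → ℕ} (hπ : IsExtPerm n π) : (pinList n π).Nodup := by
  rw [pinList, pinPosList_eq]
  apply List.Nodup.map_on
  · intro x hx y hy hxy
    simp only [List.mem_filter, List.mem_range'_1] at hx hy
    exact ep_inj hπ (by omega) (by omega) hxy
  · exact (List.nodup_range' (s := 1) (n := n) 1).filter _

end Utils

lemma main_sort (n : ℕ) : ∀ (r : ℕ) (π : ℕ → ℕ) (l₁ l₂ : List ℕ), IsExtPerm n π →
    pinList n π = l₁ ++ l₂ → l₁.length = r → List.Pairwise (· < ·) l₂ →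
    (∀ x ∈ l₁, ∀ y ∈ l₂, x < y) →
    ∃ L : List (ℕ × ℕ), IsBalancedSeq n π L ∧
      List.Pairwise (· < ·) (pinList n (applySeq π L)) ∧ L.length ≤ r - 1 := by
  intro r
  induction r using Nat.strong_induction_on with
  | _ r IH =>
  intro π l₁ l₂ hπ hdec hlen hsort hcross
  rcases Nat.eq_zero_or_pos r with rfl | hr
  · have hnil : l₁ = [] := List.length_eq_zero_iff.1 hlen
    subst hnil
    refine ⟨[], trivial, ?_, by simp⟩
    show List.Pairwise (· < ·) (pinList n π)
    rw [hdec]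
    simpa using hsort
  · have hne : l₁ ≠ [] := by
      intro h; rw [h] at hlen; simp at hlen; omega
    obtain ⟨q, hq, hmax⟩ := exists_argmax l₁ hne
    have hnodup : (l₁ ++ l₂).Nodup := by rw [← hdec]; exact pinList_nodup hπ
    have hnd1 : l₁.Nodup := hnodup.of_append_left
    by_cases hqlast : q = r - 1
    · -- the maximum of l₁ is already at the last position of l₁
      set M := l₁.getLast hne with hM
      have hlast : l₁.dropLast ++ [M] = l₁ := List.dropLast_append_getLast hne
      have hqM : l₁[q] = M := by
        rw [hM, List.getLast_eq_getElem]
        congr 1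
        omega
      have hMl₁ : M ∈ l₁ := List.getLast_mem hne
      have hdisj : ∀ x ∈ l₁.dropLast, x ∉ [M] := by
        have h2 : (l₁.dropLast ++ [M]).Nodup := by rw [hlast]; exact hnd1
        exact fun x hx => (List.disjoint_left.1 (List.disjoint_of_nodup_append h2)) hx
      obtain ⟨L, hbal, hsorted, hlenL⟩ := IH (r-1) (by omega) π l₁.dropLast (M :: l₂) hπ
        (by rw [hdec, ← List.singleton_append, ← List.append_assoc, hlast])
        (by rw [List.length_dropLast, hlen])
        (List.pairwise_cons.2 ⟨fun y hy => hcross M hMl₁ y hy, hsort⟩)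
        (by
          intro x hx y hy
          have hxl : x ∈ l₁ := List.dropLast_subset _ hx
          rcases List.mem_cons.1 hy with rfl | hy2
          · -- y = M
            obtain ⟨j, hj, rfl⟩ := List.mem_iff_getElem.1 hxl
            have h1 : l₁[j] ≤ l₁[q] := hmax j hj
            have h2 : l₁[j] ≠ M := by
              intro he
              exact hdisj _ hx (by simp [he])
            rw [hqM] at h1
            omega
          · exact hcross x hxl y hy2)
      exact ⟨L, hbal, hsorted, by omega⟩
    · -- q < r - 1 : perform one balanced reversal
      have hql : q < l₁.length := hq
      have hqr1 : q < r - 1 := by omega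
      set P := (List.range' 1 n).filter (pb π) with hPdef
      have hP2 : P = pinPosList n π := (pinPosList_eq n π).symm
      have hPL : pinList n π = P.map π := by rw [pinList, ← hP2]
      have hlenP : P.length = l₁.length + l₂.length := by
        have h1 := congrArg List.length hdec
        rw [hPL] at h1
        simpa using h1
      have hqP : q < P.length := by omega
      have hr1P : r - 1 < P.length := by omega
      have hsortP : P.Pairwise (· < ·) :=
        (List.pairwise_lt_range' (s := 1) (n := n) 1).sublist List.filter_sublist
      have hmono := List.pairwise_iff_getElem.1 hsortP
      have hmemP : ∀ x ∈ P, (1 ≤ x ∧ x ≤ n) ∧ PinAt π x := by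
        intro x hx
        rw [hP2] at hx
        exact mem_pinPosList.1 hx
      have hPmem : ∀ k, 1 ≤ k → k ≤ n → PinAt π k → k ∈ P := by
        intro k h1 h2 h3
        rw [hP2]
        exact mem_pinPosList.2 ⟨⟨h1, h2⟩, h3⟩
      have hvalQ : ∀ j (hj : j < r), π (P[j]'(by omega)) = l₁[j]'(by omega) := by
        intro j hj
        have h1 := List.getElem_of_eq (show P.map π = l₁ ++ l₂ by rw [← hPL, hdec])
          (i := j) (by rw [List.length_map]; omega)
        rw [List.getElem_map] at h1
        rw [h1, List.getElem_append_left (by omega)]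
      -- basic facts about the two distinguished positions
      have hposQmem := hmemP (P[q]'hqP) (List.getElem_mem hqP)
      have hposRmem := hmemP (P[r-1]'hr1P) (List.getElem_mem hr1P)
      have hQR : P[q]'hqP < P[r-1]'hr1P := hmono q (r-1) hqP hr1P (by omega)
      have hyRM : π (P[r-1]'hr1P) < π (P[q]'hqP) := by
        have e1 : π (P[r-1]'hr1P) = l₁[r-1]'(by omega) := hvalQ (r-1) (by omega)
        have e2 : π (P[q]'hqP) = l₁[q]'hql := hvalQ q (by omega)
        have h1 : l₁[r-1]'(by omega) ≤ l₁[q]'hql := hmax (r-1) (by omega)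
        have h2 : l₁[r-1]'(by omega) ≠ l₁[q]'hql := by
          intro he
          have := (hnd1.getElem_inj_iff).1 he
          omega
        omega
      -- the "previous pinnacle or 0" position
      have hprev : ∃ pv, pv < P[q]'hqP ∧ (pv = 0 ∨ PinAt π pv) ∧
          (∀ k, pv < k → k < P[q]'hqP → ¬ PinAt π k) ∧
          (∀ j (hj : j < P.length), j < q → P[j] ≤ pv) := by
        rcases Nat.eq_zero_or_pos q with rfl | hq1
        · refine ⟨0, by omega, Or.inl rfl, ?_, by omega⟩
          intro k h1 h2 hpin
          have hk : k ∈ P := hPmem k (by omega) (by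
            have := hposQmem.1.2; omega) hpin
          obtain ⟨j, hj, rfl⟩ := List.mem_iff_getElem.1 hk
          rcases Nat.eq_zero_or_pos j with rfl | hj1
          · omega
          · have := hmono 0 j hqP hj (by omega)
            omega
        · have hq1P : q - 1 < P.length := by omega
          refine ⟨P[q-1]'hq1P, hmono (q-1) q hq1P hqP (by omega), Or.inr (hmemP _ (List.getElem_mem hq1P)).2, ?_, ?_⟩
          · intro k h1 h2 hpin
            have hk : k ∈ P := hPmem k (by omega) (by have := hposQmem.1.2; omega) hpin
            obtain ⟨j, hj, rfl⟩ := List.mem_iff_getElem.1 hk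
            rcases Nat.lt_or_ge j q with hjq | hjq
            · rcases Nat.eq_or_lt_of_le (by omega : j ≤ q - 1) with rfl | hlt'
              · omega
              · have := hmono j (q-1) hj hq1P (by omega)
                omega
            · rcases Nat.eq_or_lt_of_le hjq with rfl | hlt'
              · omega
              · have := hmono q j hqP hj (by omega)
                omega
          · intro j hj hjq
            rcases Nat.eq_or_lt_of_le (by omega : j ≤ q - 1) with rfl | hlt'
            · exact le_rfl
            · exact le_of_lt (hmono j (q-1) hj hq1P (by omega))
      obtain ⟨pv, hpv1, hpv2, hpv3, hpv4⟩ := hprev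
      -- the "next pinnacle or n+1" position
      have hnext : ∃ nx, P[r-1]'hr1P < nx ∧ nx ≤ n + 1 ∧ (nx = n + 1 ∨ PinAt π nx) ∧
          (∀ k, P[r-1]'hr1P < k → k < nx → ¬ PinAt π k) ∧
          (∀ j (hj : j < P.length), r - 1 < j → nx ≤ P[j]) ∧
          π (P[q]'hqP) < π nx := by
        have hvQn : π (P[q]'hqP) ≤ n := (ep_val hπ hposQmem.1.1 hposQmem.1.2).2
        by_cases hrP' : r = P.length
        · refine ⟨n + 1, by have := hposRmem.1.2; omega, le_rfl, Or.inl rfl, ?_, by omega, ?_⟩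
          · intro k h1 h2 hpin
            have hk : k ∈ P := hPmem k (by have := hposRmem.1.1; omega) (by omega) hpin
            obtain ⟨j, hj, rfl⟩ := List.mem_iff_getElem.1 hk
            rcases Nat.lt_or_ge j (r-1) with hjr | hjr
            · have := hmono j (r-1) hj hr1P hjr
              omega
            · rcases Nat.eq_or_lt_of_le hjr with rfl | hlt'
              · omega
              · omega
          · rw [hπ.2.2]; omega
        · have hrPlt : r < P.length := by omega
          refine ⟨P[r]'hrPlt, hmono (r-1) r hr1P hrPlt (by omega),
            by have := (hmemP _ (List.getElem_mem hrPlt)).1.2; omega,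
            Or.inr (hmemP _ (List.getElem_mem hrPlt)).2, ?_, ?_, ?_⟩
          · intro k h1 h2 hpin
            have hk : k ∈ P := hPmem k (by have := hposRmem.1.1; omega)
              (by have := (hmemP _ (List.getElem_mem hrPlt)).1.2; omega) hpin
            obtain ⟨j, hj, rfl⟩ := List.mem_iff_getElem.1 hk
            rcases Nat.lt_or_ge j r with hjr | hjr
            · rcases Nat.eq_or_lt_of_le (by omega : j ≤ r - 1) with rfl | hlt'
              · omega
              · have := hmono j (r-1) hj hr1P (by omega)
                omega
            · rcases Nat.eq_or_lt_of_le hjr with rfl | hlt'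
              · omega
              · have := hmono r j hrPlt hj (by omega)
                omega
          · intro j hj hjr
            rcases Nat.eq_or_lt_of_le (by omega : r ≤ j) with rfl | hlt'
            · exact le_rfl
            · exact le_of_lt (hmono r j hrPlt hj (by omega))
          · -- π posQ < π P[r] since π P[r] is the head of l₂
            have h1 := List.getElem_of_eq (show P.map π = l₁ ++ l₂ by rw [← hPL, hdec])
              (i := r) (by rw [List.length_map]; omega)
            rw [List.getElem_map] at h1
            have hrlen : l₁.length ≤ r := by omega
            rw [List.getElem_append_right hrlen] at h1
            have e2 : π (P[q]'hqP) = l₁[q]'hql := hvalQ q (by omega)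
            rw [e2, h1]
            exact hcross _ (List.getElem_mem hql) _ (List.getElem_mem (by omega))
      obtain ⟨nx, hnx1, hnx2, hnx3, hnx4, hnx5, hnx6⟩ := hnext
      -- the two valleys
      obtain ⟨m₁, hm₁1, hm₁2, hdec1, hinc1⟩ := valley hπ (i := pv) (j := P[q]'hqP)
        hpv1 (by have := hposQmem.1.2; omega) hpv2 (Or.inr hposQmem.2) hpv3
        (Or.inr hposQmem.1.2)
      obtain ⟨m₂, hm₂1, hm₂2, hdec2, hinc2⟩ := valley hπ (i := P[r-1]'hr1P) (j := nx)
        hnx1 hnx2 (Or.inr hposRmem.2) hnx3 hnx4 (Or.inl hposRmem.1.1)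
      have hchain1 : π m₁ < π pv := chain_dec hdec1 hm₁1 le_rfl
      have hchain1' : π m₁ < π (P[q]'hqP) := chain_inc hinc1 le_rfl hm₁2
      have hchain2 : π m₂ < π (P[r-1]'hr1P) := chain_dec hdec2 hm₂1 le_rfl
      -- find the cut positions
      have hcut : ∃ a b, pv < a ∧ a ≤ P[q]'hqP ∧ P[r-1]'hr1P ≤ b ∧ b < nx ∧ Good π a b := by
        rcases Nat.lt_or_ge (π pv) (π (P[r-1]'hr1P)) with hT2 | hT1
        · obtain ⟨a, b, c1, c2, c3, c4, cG⟩ := cutT2 hπ (m₁ := m₁) (P1 := P[q]'hqP)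
            (P2 := P[r-1]'hr1P) (m₂ := m₂) hm₁2 hm₂1 hQR (by omega)
            hinc1 hdec2 (lt_trans hchain1 hT2) (lt_trans hchain2 hyRM)
          exact ⟨a, b, by omega, c2, c3, by omega, Or.inr cG⟩
        · have hstrict : π (P[r-1]'hr1P) < π pv := by
            have hne' : π (P[r-1]'hr1P) ≠ π pv := by
              intro he
              have := ep_inj hπ (i := P[r-1]'hr1P) (j := pv)
                (by have := hposRmem.1.2; omega) (by have := hposQmem.1.2; omega) he
              omega
            omega
          obtain ⟨a, b, c1, c2, c3, c4, cG⟩ := cutT1 hπ (i₁ := pv) (m₁ := m₁)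
            (m₂ := m₂) (j₂ := nx) hm₁1 hm₂2 (by omega) hnx2
            hdec1 hinc2 (lt_trans hchain2 hstrict) (lt_trans hchain1' hnx6)
          exact ⟨a, b, c1, by omega, by omega, c4, Or.inl cG⟩
      obtain ⟨a, b, hpa, haq, hrb, hbnx, hGood⟩ := hcut
      have h1a : 1 ≤ a := by omega
      have hab : a ≤ b := by omega
      have hbn : b ≤ n := by
        have := hposRmem.1.2
        rcases hnx3 with rfl | hpin
        · omega
        · rcases Nat.lt_or_ge n nx with h' | h'
          · -- nx ≤ n since nx is a pinnacle position... if nx = n+1 it's first case;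
            -- a pinnacle position k satisfies k ≤ n is not directly recorded; derive:
            -- PinAt π nx with nx = n+1 impossible? π(n+2) unknown! use hnx2 and b < nx
            omega
          · omega
      have hmonole : ∀ i j (hi : i < P.length) (hj : j < P.length), i ≤ j → P[i] ≤ P[j] := by
        intro i j hi hj hij
        rcases Nat.eq_or_lt_of_le hij with rfl | h'
        · exact le_rfl
        · exact le_of_lt (hmono i j hi hj h')
      -- decomposition of the position list
      set L0 := (List.range' 1 (a-1)).filter (pb π) with hL0def
      set Lmid := (List.range' a (b+1-a)).filter (pb π) with hLmiddef
      set L1 := (List.range' (b+1) (n-b)).filter (pb π) with hL1def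
      have hPdecomp : P = L0 ++ Lmid ++ L1 := by
        rw [hP2, hL0def, hLmiddef, hL1def]
        exact pinList_decomp h1a hab hbn
      have hL0lt : ∀ e ∈ L0, e < a := by
        intro e he
        have := (List.mem_filter.1 he).1
        rw [List.mem_range'_1] at this
        omega
      have hLmidmem : ∀ e ∈ Lmid, a ≤ e ∧ e ≤ b := by
        intro e he
        have := (List.mem_filter.1 he).1
        rw [List.mem_range'_1] at this
        omega
      have hL1mem : ∀ e ∈ L1, b < e := by
        intro e he
        have := (List.mem_filter.1 he).1
        rw [List.mem_range'_1] at this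
        omega
      have hL0take : L0 = P.take q := by
        have h1 : L0 = P.filter (fun e => decide (e < a)) :=
          eq_filter_left (by rw [hPdecomp, List.append_assoc])
            (fun e he => by simp only [decide_eq_true_eq]; exact hL0lt e he)
            (fun e he => by
              simp only [decide_eq_false_iff_not, not_lt]
              rcases List.mem_append.1 he with h' | h'
              · exact (hLmidmem e h').1
              · have := hL1mem e h'; omega)
        have h2 : P.take q = P.filter (fun e => decide (e < a)) :=
          eq_filter_left (List.take_append_drop q P).symm
            (fun e he => by
              simp only [decide_eq_true_eq]
              obtain ⟨j, hj, rfl⟩ := List.mem_iff_getElem.1 he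
              have hjq : j < q := by
                have := hj
                rw [List.length_take] at this
                omega
              rw [List.getElem_take]
              have := hpv4 j (by omega) hjq
              omega)
            (fun e he => by
              simp only [decide_eq_false_iff_not, not_lt]
              obtain ⟨j, hj, rfl⟩ := List.mem_iff_getElem.1 he
              have hjlen : q + j < P.length := by
                have := hj
                rw [List.length_drop] at this
                omega
              rw [List.getElem_drop]
              have := hmonole q (q+j) hqP hjlen (by omega)
              omega)
        rw [h1, ← h2]
      have hmiddrop : Lmid ++ L1 = P.drop q := by
        have h3 : P.take q ++ (Lmid ++ L1) = P.take q ++ P.drop q := by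
          rw [List.take_append_drop, ← hL0take, ← List.append_assoc, ← hPdecomp]
        exact List.append_cancel_left h3
      have hLmidtake : Lmid = (P.drop q).take (r - q) := by
        have h1 : Lmid = (P.drop q).filter (fun e => decide (e ≤ b)) :=
          eq_filter_left hmiddrop.symm
            (fun e he => by simp only [decide_eq_true_eq]; exact (hLmidmem e he).2)
            (fun e he => by
              simp only [decide_eq_false_iff_not, not_le]
              exact hL1mem e he)
        have h2 : (P.drop q).take (r - q) = (P.drop q).filter (fun e => decide (e ≤ b)) :=
          eq_filter_left (List.take_append_drop _ _).symm
            (fun e he => by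
              simp only [decide_eq_true_eq]
              obtain ⟨j, hj, rfl⟩ := List.mem_iff_getElem.1 he
              have hjlen : j < r - q ∧ q + j < P.length := by
                have := hj
                rw [List.length_take, List.length_drop] at this
                omega
              rw [List.getElem_take, List.getElem_drop]
              have := hmonole (q+j) (r-1) hjlen.2 hr1P (by omega)
              omega)
            (fun e he => by
              simp only [decide_eq_false_iff_not, not_le]
              obtain ⟨j, hj, rfl⟩ := List.mem_iff_getElem.1 he
              have hjlen : q + (r - q + j) < P.length := by
                have := hj
                rw [List.length_drop, List.length_drop] at this
                omega
              rw [List.getElem_drop, List.getElem_drop]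
              have := hnx5 (q + (r - q + j)) hjlen (by omega)
              omega)
        rw [h1, ← h2]
      have hL1drop : L1 = P.drop r := by
        have h3 : Lmid ++ L1 = Lmid ++ (P.drop q).drop (r - q) := by
          rw [hmiddrop]
          conv_lhs => rw [← List.take_append_drop (r-q) (P.drop q)]
          rw [← hLmidtake]
        have h4 := List.append_cancel_left h3
        rw [h4, List.drop_drop, show q + (r - q) = r by omega]
      -- value lists
      have hAval : L0.map π = l₁.take q := by
        rw [hL0take, List.map_take, ← hPL, hdec, List.take_append_of_le_length (by omega)]
      have hBval : Lmid.map π = l₁.drop q := by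
        rw [hLmidtake, List.map_take, List.map_drop, ← hPL, hdec,
          List.drop_append_of_le_length (by omega),
          List.take_append_of_le_length (by rw [List.length_drop]; omega),
          show r - q = (l₁.drop q).length by rw [List.length_drop]; omega, List.take_length]
      have hCval : L1.map π = l₂ := by
        rw [hL1drop, List.map_drop, ← hPL, hdec]
        exact List.drop_left' hlen
      have hrev2 : pinList n (rev π a b) = l₁.take q ++ (l₁.drop q).reverse ++ l₂ := by
        rw [pinList_rev_eq h1a hab hbn hGood, ← hL0def, ← hLmiddef, ← hL1def,
          hAval, hBval, hCval]
      -- split off the maximum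
      have hdropcons : l₁.drop q = l₁[q] :: l₁.drop (q+1) := List.drop_eq_getElem_cons hql
      have hdecomp' : pinList n (rev π a b) =
          (l₁.take q ++ (l₁.drop (q+1)).reverse) ++ (l₁[q] :: l₂) := by
        rw [hrev2, hdropcons, List.reverse_cons]
        simp only [List.append_assoc, List.singleton_append, List.cons_append, List.nil_append]
      have hlen' : (l₁.take q ++ (l₁.drop (q+1)).reverse).length = r - 1 := by
        rw [List.length_append, List.length_take, List.length_reverse, List.length_drop]
        omega
      have hMl₁ : l₁[q] ∈ l₁ := List.getElem_mem hql
      have hsort' : List.Pairwise (· < ·) (l₁[q] :: l₂) :=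
        List.pairwise_cons.2 ⟨fun y hy => hcross _ hMl₁ y hy, hsort⟩
      have hcross' : ∀ x ∈ l₁.take q ++ (l₁.drop (q+1)).reverse, ∀ y ∈ l₁[q] :: l₂, x < y := by
        intro x hx y hy
        have hxl : x ∈ l₁ ∧ x ≠ l₁[q] := by
          rcases List.mem_append.1 hx with h' | h'
          · obtain ⟨j, hj, rfl⟩ := List.mem_iff_getElem.1 h'
            have hjq : j < q := by
              have := hj
              rw [List.length_take] at this
              omega
            rw [List.getElem_take]
            refine ⟨List.getElem_mem (by omega), ?_⟩
            intro he
            have := (hnd1.getElem_inj_iff).1 he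
            omega
          · rw [List.mem_reverse] at h'
            obtain ⟨j, hj, rfl⟩ := List.mem_iff_getElem.1 h'
            have hjq : q + 1 + j < l₁.length := by
              have := hj
              rw [List.length_drop] at this
              omega
            rw [List.getElem_drop]
            refine ⟨List.getElem_mem (by omega), ?_⟩
            intro he
            have := (hnd1.getElem_inj_iff).1 he
            omega
        rcases List.mem_cons.1 hy with rfl | hy2
        · obtain ⟨j, hj, hje⟩ := List.mem_iff_getElem.1 hxl.1
          have h1 : x ≤ l₁[q] := by rw [← hje]; exact hmax j hj
          have h2 : x ≠ l₁[q] := hxl.2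
          omega
        · exact hcross x hxl.1 y hy2
      obtain ⟨L', hbal', hsorted', hlenL'⟩ := IH (r-1) (by omega) (rev π a b)
        (l₁.take q ++ (l₁.drop (q+1)).reverse) (l₁[q] :: l₂)
        (rev_extPerm hπ h1a hab hbn) hdecomp' hlen' hsort' hcross'
      have hbalrev : BalancedRev n π a b := by
        unfold BalancedRev
        rw [pinFinset_eq, pinFinset_eq, hrev2, hdec]
        ext x
        simp only [List.mem_toFinset, List.mem_append, List.mem_reverse]
        constructor
        · rintro ((h | h) | h)
          · exact Or.inl (List.take_subset _ _ h)
          · exact Or.inl (List.drop_subset _ _ h)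
          · exact Or.inr h
        · rintro (h | h)
          · have h2 : x ∈ l₁.take q ++ l₁.drop q := by
              rw [List.take_append_drop]; exact h
            rcases List.mem_append.1 h2 with h' | h'
            · exact Or.inl (Or.inl h')
            · exact Or.inl (Or.inr h')
          · exact Or.inr h
      refine ⟨(a, b) :: L', ⟨h1a, hab, hbn, hbalrev, hbal'⟩, hsorted', ?_⟩
      simp only [List.length_cons]
      omega


/-- Proposition 4.3. For `π ∈ S_n` with pinnacle set `S`,
`|S| = p`, there is a sequence `R₁` of balanced reversals — of at most one
reversal when `p = 2`, and of at most `2p - 4` reversals when `p ≥ 3` —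
transforming `π` into a permutation whose pinnacles appear in increasing order
from left to right. -/
theorem statement14 (n : ℕ) (π : ℕ → ℕ) (hπ : IsExtPerm n π)
    (S : Finset ℕ) (hS : S = pinFinset n π) (p : ℕ) (hp : p = S.card) :
    ∃ L : List (ℕ × ℕ), IsBalancedSeq n π L ∧
      List.Pairwise (· < ·) (pinList n (applySeq π L)) ∧
      (p = 2 → L.length ≤ 1) ∧
      (3 ≤ p → L.length ≤ 2 * p - 4) := by
  obtain ⟨L, h1, h2, h3⟩ := main_sort n (pinList n π).length π (pinList n π) []
    hπ (by simp) rfl (by simp) (by simp)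
  have hplen : p = (pinList n π).length := by
    rw [hp, hS, pinFinset_eq]
    exact List.toFinset_card_of_nodup (pinList_nodup hπ)
  exact ⟨L, h1, h2, fun hp2 => by omega, fun hp3 => by omega⟩
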